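/- Every subgroup of an equationally Artinian group is equationally Artinian: if A is an equationally Artinian group and H is a subgroup of A, then H (as a group in its own right) is equationally Artinian. -/
import Mathlib


/-- The Diophantine radical `Rad_H(E)` of a subset `E ⊆ Hⁿ` (coefficients from `H` itself). -/
def RadH (H : Type*) [Group H] {n : ℕ} (E : Set (Fin n → H)) :
    Set (Monoid.Coprod H (FreeGroup (Fin n))) :=
  {w | ∀ e ∈ E, Monoid.Coprod.lift (MonoidHom.id H) (FreeGroup.lift e) w = 1}

/-- A group is equationally Artinian (Diophantine sense). -/
def EquationallyArtinian (H : Type*) [Group H] : Prop :=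
  ∀ (n : ℕ) (E : Set (Fin n → H)), ∃ E₀ ⊆ E, E₀.Finite ∧ RadH H E₀ = RadH H E

private lemma key_comm {A : Type*} [Group A] (H : Subgroup A) {n : ℕ} (e : Fin n → H)
    (w : Monoid.Coprod H (FreeGroup (Fin n))) :
    Monoid.Coprod.lift (MonoidHom.id H) (FreeGroup.lift e) w = 1 ↔
    Monoid.Coprod.lift (MonoidHom.id A) (FreeGroup.lift (Subtype.val ∘ e))
      (Monoid.Coprod.map H.subtype (MonoidHom.id (FreeGroup (Fin n))) w) = 1 := by
  have hcomp : (Monoid.Coprod.lift (MonoidHom.id A)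
        (FreeGroup.lift (Subtype.val ∘ e))).comp
      (Monoid.Coprod.map H.subtype (MonoidHom.id (FreeGroup (Fin n)))) =
      H.subtype.comp (Monoid.Coprod.lift (MonoidHom.id H) (FreeGroup.lift e)) := by
    ext x <;> simp
  have := DFunLike.congr_fun hcomp w
  simp only [MonoidHom.comp_apply] at this
  rw [this]
  constructor
  · intro h; rw [h]; simp
  · intro h
    exact H.subtype_injective (by simpa using h)

/-- Every subgroup of an equationally Artinian group is equationally Artinian. -/
theorem subgroup_equationallyArtinian {A : Type*} [Group A]
    (hA : EquationallyArtinian A) (H : Subgroup A) :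
    EquationallyArtinian H := by
  intro n E
  set E' : Set (Fin n → A) := (fun e => Subtype.val ∘ e) '' E with hE'
  obtain ⟨E₀', hsub, hfin, hrad⟩ := hA n E'
  have hex : ∀ x ∈ E₀', ∃ e ∈ E, Subtype.val ∘ e = x := fun x hx => hsub hx
  choose f hfE hfx using hex
  refine ⟨{y | ∃ x, ∃ hx : x ∈ E₀', f x hx = y}, ?_, hfin.dependent_image f, ?_⟩
  · rintro y ⟨x, hx, rfl⟩; exact hfE x hx
  · ext w
    constructor
    · intro hw e he
      -- show φ w ∈ RadH A E₀'
      have hφ : (Monoid.Coprod.map H.subtype (MonoidHom.id (FreeGroup (Fin n))) w) ∈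
          RadH A E₀' := by
        intro x hx
        have h1 := hw (f x hx) ⟨x, hx, rfl⟩
        rw [key_comm] at h1
        rwa [hfx x hx] at h1
      rw [hrad] at hφ
      rw [key_comm H e]
      exact hφ _ ⟨e, he, rfl⟩
    · intro hw y hy
      obtain ⟨x, hx, rfl⟩ := hy
      exact hw _ (hfE x hx)
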